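/- arXiv:2008.07238 — 4 statements merged into one kernel-verified Lean document; each statement's English description precedes it below -/
import Mathlib

section
/- For f ∈ L²(ℝ) and any x ∈ ℝ, the Fourier transform of ω ↦ |Gf(x,ω)|² satisfies F₂(|Gf|²)(x,ω) = ⟨f_ω, T_x φ_ω⟩, where f_ω = (T_ω f)·conj(f), φ_ω = (T_ω φ)·conj(φ), T_x denotes translation by x, and φ(t) = e^{-πt²}. -/
set_option maxHeartbeats 1000000

open MeasureTheory Complex

section GaborAux

open Real Filter FourierTransform

/-- autocorrelation -/
noncomputable def acorr (g : ℝ → ℂ) (τ : ℝ) : ℂ :=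
  ∫ t : ℝ, g t * (starRingEnd ℂ) (g (t - τ))

variable {g : ℝ → ℂ}

lemma integrable_conj_neg (hg1 : Integrable g (volume : Measure ℝ)) :
    Integrable (fun s => (starRingEnd ℂ) (g (-s))) (volume : Measure ℝ) :=
  Integrable.mono' (hg1.comp_neg).norm
    (continuous_star.comp_aestronglyMeasurable (hg1.comp_neg).aestronglyMeasurable)
    (Filter.Eventually.of_forall fun s => by simp)

lemma integrable_prod_acorr (hg1 : Integrable g (volume : Measure ℝ)) :
    Integrable (fun p : ℝ × ℝ => g p.2 * (starRingEnd ℂ) (g (p.2 - p.1)))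
      ((volume : Measure ℝ).prod volume) := by
  have h := hg1.convolution_integrand (ContinuousLinearMap.mul ℝ ℂ)
    (integrable_conj_neg hg1)
  simpa [neg_sub] using h

lemma integrable_acorr (hg1 : Integrable g (volume : Measure ℝ)) :
    Integrable (acorr g) (volume : Measure ℝ) := by
  have := (integrable_prod_acorr hg1).integral_prod_left
  exact this

lemma fourier_acorr (hg1 : Integrable g (volume : Measure ℝ)) (ν : ℝ) :
    𝓕 (acorr g) ν = 𝓕 g ν * (starRingEnd ℂ) (𝓕 g ν) := by
  have hint : Integrable
      (fun p : ℝ × ℝ => Complex.exp (↑(-2 * π * p.1 * ν) * Complex.I) *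
        (g p.2 * (starRingEnd ℂ) (g (p.2 - p.1)))) ((volume : Measure ℝ).prod volume) := by
    apply (integrable_prod_acorr hg1).bdd_mul (c := 1)
    · exact (Complex.continuous_exp.comp (by continuity)).aestronglyMeasurable
    · exact Filter.Eventually.of_forall fun p => le_of_eq (by rw [Complex.norm_exp_ofReal_mul_I])
  calc 𝓕 (acorr g) ν
      = ∫ τ : ℝ, ∫ t : ℝ, Complex.exp (↑(-2 * π * τ * ν) * Complex.I) *
          (g t * (starRingEnd ℂ) (g (t - τ))) := by
        rw [Real.fourier_real_eq_integral_exp_smul]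
        simp_rw [acorr, smul_eq_mul, ← MeasureTheory.integral_const_mul]
    _ = ∫ t : ℝ, ∫ τ : ℝ, Complex.exp (↑(-2 * π * τ * ν) * Complex.I) *
          (g t * (starRingEnd ℂ) (g (t - τ))) := by
        exact MeasureTheory.integral_integral_swap hint
    _ = ∫ t : ℝ, (Complex.exp (↑(-2 * π * t * ν) * Complex.I) * g t) *
          (starRingEnd ℂ) (𝓕 g ν) := by
        refine integral_congr_ae (Filter.Eventually.of_forall fun t => ?_)
        dsimp only
        have hsub : (∫ τ : ℝ, Complex.exp (↑(-2 * π * τ * ν) * Complex.I) *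
            (g t * (starRingEnd ℂ) (g (t - τ))))
            = ∫ s : ℝ, Complex.exp (↑(-2 * π * (t - s) * ν) * Complex.I) *
              (g t * (starRingEnd ℂ) (g (t - (t - s)))) := by
          exact (MeasureTheory.integral_sub_left_eq_self
            (fun τ => Complex.exp (↑(-2 * π * τ * ν) * Complex.I) *
              (g t * (starRingEnd ℂ) (g (t - τ)))) volume t).symm
        rw [hsub]
        have : ∀ s : ℝ, Complex.exp (↑(-2 * π * (t - s) * ν) * Complex.I) *
            (g t * (starRingEnd ℂ) (g (t - (t - s))))
            = (Complex.exp (↑(-2 * π * t * ν) * Complex.I) * g t) *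
              (starRingEnd ℂ) (Complex.exp (↑(-2 * π * s * ν) * Complex.I) * g s) := by
          intro s
          have : t - (t - s) = s := by ring
          have hc : (starRingEnd ℂ) (↑(-2 * π * s * ν) * Complex.I)
              = -(↑(-2 * π * s * ν) * Complex.I) := by
            rw [map_mul, Complex.conj_I, Complex.conj_ofReal]
            ring
          have he : (↑(-2 * π * (t - s) * ν) : ℂ) * Complex.I
              = ↑(-2 * π * t * ν) * Complex.I + -(↑(-2 * π * s * ν) * Complex.I) := by
            push_cast
            ring
          rw [this, map_mul, ← Complex.exp_conj, hc, he, Complex.exp_add]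
          ring
        simp_rw [this]
        rw [MeasureTheory.integral_const_mul, Real.fourier_real_eq_integral_exp_smul,
          ← integral_conj]
        simp_rw [smul_eq_mul]
    _ = 𝓕 g ν * (starRingEnd ℂ) (𝓕 g ν) := by
        rw [MeasureTheory.integral_mul_const, Real.fourier_real_eq_integral_exp_smul]
        simp_rw [smul_eq_mul]

lemma continuous_acorr (hg2 : MemLp g 2 (volume : Measure ℝ)) :
    Continuous (acorr g) := by
  set G : Lp ℂ 2 (volume : Measure ℝ) := hg2.toLp g with hG
  have hmp : ∀ τ : ℝ, MeasurePreserving (fun t : ℝ => t - τ) volume volume :=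
    fun τ => measurePreserving_sub_right volume τ
  have hTmapc : Continuous fun τ : ℝ => (⟨fun t => t - τ, by fun_prop⟩ : C(ℝ, ℝ)) := by
    apply ContinuousMap.continuous_of_continuous_uncurry
    exact continuous_snd.sub continuous_fst
  have hcomp : Continuous fun τ : ℝ =>
      Lp.compMeasurePreserving (p := 2) (E := ℂ)
        (fun t : ℝ => t - τ) (hmp τ) G := by
    have := Continuous.compMeasurePreservingLp (μ := (volume : Measure ℝ))
      (ν := (volume : Measure ℝ)) (f := fun _ : ℝ => G)
      (g := fun τ : ℝ => (⟨fun t => t - τ, by fun_prop⟩ : C(ℝ, ℝ)))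
      continuous_const hTmapc (fun τ => hmp τ) (by norm_num)
    exact this
  have hinner : Continuous fun τ : ℝ =>
      (inner ℂ (Lp.compMeasurePreserving (p := 2) (E := ℂ)
        (fun t : ℝ => t - τ) (hmp τ) G) G : ℂ) :=
    continuous_inner.comp (hcomp.prodMk continuous_const)
  have heq : ∀ τ : ℝ, acorr g τ =
      (inner ℂ (Lp.compMeasurePreserving (p := 2) (E := ℂ)
        (fun t : ℝ => t - τ) (hmp τ) G) G : ℂ) := by
    intro τ
    rw [MeasureTheory.L2.inner_def]
    have h1 : (Lp.compMeasurePreserving (p := 2) (E := ℂ)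
        (fun t : ℝ => t - τ) (hmp τ) G : ℝ → ℂ) =ᵐ[volume] fun t => g (t - τ) := by
      refine (Lp.coeFn_compMeasurePreserving G (hmp τ)).trans ?_
      exact (hmp τ).quasiMeasurePreserving.ae_eq_comp hg2.coeFn_toLp
    have h2 : (G : ℝ → ℂ) =ᵐ[volume] g := hg2.coeFn_toLp
    rw [acorr]
    refine integral_congr_ae ?_
    filter_upwards [h1, h2] with t ht1 ht2
    rw [RCLike.inner_apply, ht1, ht2]
  simpa [← funext heq] using hinner

lemma tendsto_gauss_fourier {A : ℝ → ℂ} (hA : Integrable A (volume : Measure ℝ))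
    (hc : ContinuousAt A 0) :
    Tendsto (fun c : ℝ => ∫ ν : ℝ, Complex.exp (-(c : ℂ)⁻¹ * ν ^ 2) * 𝓕 A ν)
      atTop (nhds (A 0)) := by
  have hflip : (innerₗ ℝ).flip = innerₗ ℝ := by
    apply LinearMap.ext; intro a; apply LinearMap.ext; intro b
    simp only [LinearMap.flip_apply, innerₗ_apply_apply]
    exact real_inner_comm a b
  apply (Real.tendsto_integral_gaussian_smul' hA hc).congr'
  filter_upwards [Filter.Ioi_mem_atTop 0] with d (hd : 0 < d)
  have hb : (0:ℝ) < ((d:ℂ)⁻¹).re := by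
    rw [← Complex.ofReal_inv]
    simpa using inv_pos.2 hd
  set γ : ℝ → ℂ := fun v =>
    Complex.exp (-(d:ℂ)⁻¹ * ‖v‖^2 + 2 * π * Complex.I * ((inner ℝ (0:ℝ) v : ℝ) : ℂ)) with hγ
  have J : Integrable γ volume :=
    GaussianFourier.integrable_cexp_neg_mul_sq_norm_add hb _ _
  have h2 : ∫ ξ : ℝ, 𝓕 γ ξ • A ξ = ∫ v : ℝ, γ v • 𝓕 A v := by
    have := VectorFourier.integral_fourierIntegral_smul_eq_flip (L := innerₗ ℝ)
      Real.continuous_fourierChar continuous_inner J hA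
    rw [hflip] at this
    exact this
  have h3 : ∀ w : ℝ, 𝓕 γ w =
      ((π : ℂ) * d) ^ ((Module.finrank ℝ ℝ : ℂ) / 2) *
        Complex.exp (-(π:ℂ)^2 * d * ((‖(0:ℝ) - w‖ : ℝ) : ℂ)^2) := by
    intro w
    rw [hγ, fourier_gaussian_innerProductSpace' hb 0 w]
    congr 1
    · congr 1
      rw [div_eq_mul_inv, inv_inv]
    · congr 1
      rw [div_eq_mul_inv, inv_inv]
      ring
  have h1 : ∀ ν : ℝ, γ ν • 𝓕 A ν = Complex.exp (-(d:ℂ)⁻¹ * (ν:ℂ) ^ 2) * 𝓕 A ν := by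
    intro ν
    have hz : (inner ℝ (0:ℝ) ν : ℝ) = 0 := by simp
    have hn : ((‖ν‖ : ℝ) : ℂ)^2 = ((ν:ℂ))^2 := by
      rw [Real.norm_eq_abs]
      norm_cast
      exact sq_abs ν
    rw [hγ, smul_eq_mul]
    dsimp only
    rw [hz, hn]
    norm_num
  have key : (∫ v : ℝ, γ v • 𝓕 A v) = ∫ ν : ℝ, Complex.exp (-(d:ℂ)⁻¹ * (ν:ℂ)^2) * 𝓕 A ν :=
    integral_congr_ae (Filter.Eventually.of_forall h1)
  rw [← key, ← h2]
  exact integral_congr_ae (Filter.Eventually.of_forall fun w => by dsimp only; rw [h3 w])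

lemma integrable_fourier_acorr (hg1 : Integrable g (volume : Measure ℝ))
    (hg2 : MemLp g 2 (volume : Measure ℝ)) :
    Integrable (𝓕 (acorr g)) (volume : Measure ℝ) := by
  have hA : Integrable (acorr g) volume := integrable_acorr hg1
  have hcont : Continuous (acorr g) := continuous_acorr hg2
  set φ : ℝ → ℝ := fun ν => ‖𝓕 g ν‖ ^ 2 with hφ
  have hFA : ∀ ν : ℝ, 𝓕 (acorr g) ν = ((φ ν : ℝ) : ℂ) := by
    intro ν
    rw [fourier_acorr hg1 ν, Complex.mul_conj', hφ]
    push_cast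
    ring
  have hFgcont : Continuous (𝓕 g) :=
    VectorFourier.fourierIntegral_continuous Real.continuous_fourierChar continuous_inner hg1
  have hφcont : Continuous φ := (hFgcont.norm).pow 2
  have hφnonneg : ∀ ν, 0 ≤ φ ν := fun ν => sq_nonneg _
  have hbound : ∀ ν, φ ν ≤ (∫ t : ℝ, ‖g t‖) ^ 2 := by
    intro ν
    have h := VectorFourier.norm_fourierIntegral_le_integral_norm
      Real.fourierChar volume (innerₗ ℝ) g ν
    exact pow_le_pow_left₀ (norm_nonneg _) h 2
  have hT := tendsto_gauss_fourier hA hcont.continuousAt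
  have hreal : ∀ c : ℝ, (∫ ν : ℝ, Complex.exp (-(c:ℂ)⁻¹ * (ν:ℂ) ^ 2) * 𝓕 (acorr g) ν)
      = (((∫ ν : ℝ, Real.exp (-c⁻¹ * ν ^ 2) * φ ν) : ℝ) : ℂ) := by
    intro c
    have : ((((∫ ν : ℝ, Real.exp (-c⁻¹ * ν ^ 2) * φ ν) : ℝ)) : ℂ)
        = ∫ ν : ℝ, ((Real.exp (-c⁻¹ * ν ^ 2) * φ ν : ℝ) : ℂ) :=
      (integral_ofReal (𝕜 := ℂ)).symm
    rw [this]
    refine integral_congr_ae (Filter.Eventually.of_forall fun ν => ?_)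
    dsimp only
    rw [hFA ν]
    push_cast
    ring
  set I : ℝ → ℝ := fun c => ∫ ν : ℝ, Real.exp (-c⁻¹ * ν ^ 2) * φ ν with hI
  have hTre : Tendsto I atTop (nhds ((acorr g 0).re)) := by
    have h1 : Tendsto (fun c : ℝ => ((I c : ℝ) : ℂ)) atTop (nhds (acorr g 0)) := by
      refine hT.congr fun c => ?_
      rw [hreal c]
    have h2 := (Complex.continuous_re.tendsto (acorr g 0)).comp h1
    exact h2
  have hint : ∀ c : ℝ, 0 < c → Integrable (fun ν : ℝ => Real.exp (-c⁻¹ * ν ^ 2) * φ ν) volume := by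
    intro c hc
    have h := (integrable_exp_neg_mul_sq (inv_pos.2 hc)).bdd_mul (c := (∫ t : ℝ, ‖g t‖) ^ 2) hφcont.aestronglyMeasurable
      (Filter.Eventually.of_forall fun ν => by
        rw [Real.norm_eq_abs, _root_.abs_of_nonneg (hφnonneg ν)]
        exact hbound ν)
    exact h.congr (Filter.Eventually.of_forall fun ν => mul_comm _ _)
  have hnat : Tendsto (fun n : ℕ => ((n : ℝ) + 1)) atTop atTop :=
    tendsto_atTop_add_const_right atTop 1 tendsto_natCast_atTop_atTop
  have hIn : Tendsto (fun n : ℕ => I ((n : ℝ) + 1)) atTop (nhds ((acorr g 0).re)) :=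
    hTre.comp hnat
  have hposn : ∀ n : ℕ, (0:ℝ) < (n : ℝ) + 1 := fun n => by positivity
  have hlim_pt : ∀ ν : ℝ, Filter.liminf
      (fun n : ℕ => ENNReal.ofReal (Real.exp (-((n:ℝ)+1)⁻¹ * ν ^ 2) * φ ν)) atTop
      = ENNReal.ofReal (φ ν) := by
    intro ν
    apply Filter.Tendsto.liminf_eq
    apply ENNReal.tendsto_ofReal
    have h0 : Tendsto (fun n : ℕ => -((n:ℝ)+1)⁻¹ * ν ^ 2) atTop (nhds 0) := by
      have := (tendsto_inv_atTop_zero.comp hnat).neg.mul_const (ν ^ 2)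
      simpa using this
    have he : Tendsto (fun n : ℕ => Real.exp (-((n:ℝ)+1)⁻¹ * ν ^ 2)) atTop (nhds 1) := by
      have := (Real.continuous_exp.tendsto 0).comp h0
      rw [Real.exp_zero] at this
      exact this
    have := he.mul_const (φ ν)
    simpa using this
  have hlin : (∫⁻ ν : ℝ, ENNReal.ofReal (φ ν)) < ⊤ := by
    have step1 : (∫⁻ ν : ℝ, ENNReal.ofReal (φ ν))
        = ∫⁻ ν : ℝ, Filter.liminf
          (fun n : ℕ => ENNReal.ofReal (Real.exp (-((n:ℝ)+1)⁻¹ * ν ^ 2) * φ ν)) atTop :=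
      lintegral_congr fun ν => (hlim_pt ν).symm
    have step2 : (∫⁻ ν : ℝ, Filter.liminf
          (fun n : ℕ => ENNReal.ofReal (Real.exp (-((n:ℝ)+1)⁻¹ * ν ^ 2) * φ ν)) atTop)
        ≤ Filter.liminf (fun n : ℕ =>
            ∫⁻ ν : ℝ, ENNReal.ofReal (Real.exp (-((n:ℝ)+1)⁻¹ * ν ^ 2) * φ ν)) atTop := by
      apply MeasureTheory.lintegral_liminf_le
      intro n
      exact (ENNReal.measurable_ofReal.comp
        (((Real.continuous_exp.comp (by fun_prop)).mul hφcont).measurable))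
    have step3 : ∀ n : ℕ, (∫⁻ ν : ℝ, ENNReal.ofReal (Real.exp (-((n:ℝ)+1)⁻¹ * ν ^ 2) * φ ν))
        = ENNReal.ofReal (I ((n:ℝ)+1)) := by
      intro n
      rw [hI]
      rw [← MeasureTheory.ofReal_integral_eq_lintegral_ofReal (hint _ (hposn n))
        (Filter.Eventually.of_forall fun ν => mul_nonneg (Real.exp_nonneg _) (hφnonneg ν))]
    have step4 : Filter.liminf (fun n : ℕ =>
          ∫⁻ ν : ℝ, ENNReal.ofReal (Real.exp (-((n:ℝ)+1)⁻¹ * ν ^ 2) * φ ν)) atTop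
        = ENNReal.ofReal ((acorr g 0).re) := by
      have : Tendsto (fun n : ℕ => ENNReal.ofReal (I ((n:ℝ)+1))) atTop
          (nhds (ENNReal.ofReal ((acorr g 0).re))) := ENNReal.tendsto_ofReal hIn
      have h := this.liminf_eq
      rw [← h]
      exact Filter.liminf_congr (Filter.Eventually.of_forall fun n => step3 n)
    calc (∫⁻ ν : ℝ, ENNReal.ofReal (φ ν))
        ≤ Filter.liminf (fun n : ℕ =>
            ∫⁻ ν : ℝ, ENNReal.ofReal (Real.exp (-((n:ℝ)+1)⁻¹ * ν ^ 2) * φ ν)) atTop := by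
          rw [step1]; exact step2
      _ = ENNReal.ofReal ((acorr g 0).re) := step4
      _ < ⊤ := ENNReal.ofReal_lt_top
  have hφint : Integrable φ volume := by
    refine ⟨hφcont.aestronglyMeasurable, ?_⟩
    rw [MeasureTheory.hasFiniteIntegral_iff_ofReal
      (Filter.Eventually.of_forall hφnonneg)]
    exact hlin
  exact hφint.ofReal.congr (Filter.Eventually.of_forall fun ν => (hFA ν).symm)

end GaborAux

/-- The Gabor transform with Gaussian window `φ(t) = exp(-π t²)`. -/
noncomputable def gaborTransform (f : ℝ → ℂ) (x ω : ℝ) : ℂ :=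
  ∫ t : ℝ, f t * (Real.exp (-Real.pi * (t - x)^2) : ℂ) *
    Complex.exp (-2 * Real.pi * Complex.I * t * ω)

/-- `F₂(|Gf|²)(x,ω) = ⟨f_ω, T_x φ_ω⟩` where `h_τ = (T_τ h)·conj(h)` and
`φ(t) = exp(-π t²)` (so `φ_ω` is real-valued and equals its own conjugate). -/
theorem fourier_of_spectrogram (f : ℝ → ℂ) (hf : MemLp f 4 volume)
    (hsupp : HasCompactSupport f) (x ω : ℝ) :
    (∫ ν : ℝ, ((‖gaborTransform f x ν‖^2 : ℝ) : ℂ) *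
        Complex.exp (-2 * Real.pi * Complex.I * ν * ω)) =
      ∫ t : ℝ, (f (t - ω) * starRingEnd ℂ (f t)) *
        starRingEnd ℂ ((Real.exp (-Real.pi * ((t - x) - ω)^2) : ℂ) *
          starRingEnd ℂ (Real.exp (-Real.pi * (t - x)^2) : ℂ)) := by
  open Real Filter FourierTransform in
  set gfun : ℝ → ℂ := fun t => f t * ((Real.exp (-Real.pi * (t - x)^2) : ℝ) : ℂ) with hgfun
  have hgausscont : Continuous fun t : ℝ => ((Real.exp (-Real.pi * (t - x)^2) : ℝ) : ℂ) := by
    fun_prop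
  have hgmeas : AEStronglyMeasurable gfun volume :=
    hf.aestronglyMeasurable.mul hgausscont.aestronglyMeasurable
  have hsupp' : ∀ y ∉ tsupport f, f y = 0 := fun y hy => image_eq_zero_of_notMem_tsupport hy
  have hμs : volume (tsupport f) ≠ ⊤ := hsupp.measure_lt_top.ne
  have hf2 : MemLp f 2 volume :=
    hf.mono_exponent_of_measure_support_ne_top hsupp' hμs (by norm_num)
  have hf1 : Integrable f volume := memLp_one_iff_integrable.mp
    (hf.mono_exponent_of_measure_support_ne_top hsupp' hμs (by norm_num))
  have hgauss_le : ∀ t : ℝ, ‖((Real.exp (-Real.pi * (t - x)^2) : ℝ) : ℂ)‖ ≤ 1 := by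
    intro t
    rw [Complex.norm_real, Real.norm_eq_abs, Real.abs_exp, Real.exp_le_one_iff]
    have : (0:ℝ) ≤ Real.pi * (t - x)^2 := by positivity
    linarith
  have hnorm_le : ∀ t : ℝ, ‖gfun t‖ ≤ ‖f t‖ := by
    intro t
    rw [hgfun]
    calc ‖f t * _‖ = ‖f t‖ * ‖((Real.exp (-Real.pi * (t - x)^2) : ℝ) : ℂ)‖ := norm_mul _ _
      _ ≤ ‖f t‖ * 1 := by
          have := hgauss_le t
          gcongr
      _ = ‖f t‖ := mul_one _
  have hg1 : Integrable gfun volume :=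
    Integrable.mono' hf1.norm hgmeas (Filter.Eventually.of_forall hnorm_le)
  have hg2 : MemLp gfun 2 volume :=
    hf2.of_le hgmeas (Filter.Eventually.of_forall hnorm_le)
  have hgabor : ∀ ν : ℝ, gaborTransform f x ν = 𝓕 gfun ν := by
    intro ν
    rw [Real.fourier_real_eq_integral_exp_smul, gaborTransform]
    refine integral_congr_ae (Filter.Eventually.of_forall fun t => ?_)
    dsimp only
    rw [smul_eq_mul]
    have he : (↑(-2 * Real.pi * t * ν) : ℂ) * Complex.I
        = -2 * Real.pi * Complex.I * t * ν := by
      push_cast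
      ring
    rw [hgfun, he]
    ring
  have hLHS : (∫ ν : ℝ, ((‖gaborTransform f x ν‖^2 : ℝ) : ℂ) *
        Complex.exp (-2 * Real.pi * Complex.I * ν * ω))
      = 𝓕 (𝓕 (acorr gfun)) ω := by
    rw [Real.fourier_real_eq_integral_exp_smul]
    refine integral_congr_ae (Filter.Eventually.of_forall fun ν => ?_)
    dsimp only
    rw [smul_eq_mul, fourier_acorr hg1 ν, Complex.mul_conj', ← hgabor ν]
    have he : (↑(-2 * Real.pi * ν * ω) : ℂ) * Complex.I
        = -2 * Real.pi * Complex.I * ν * ω := by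
      push_cast
      ring
    rw [he]
    push_cast
    ring
  rw [hLHS]
  have hinv : 𝓕 (𝓕 (acorr gfun)) ω = acorr gfun (-ω) := by
    have h1 : 𝓕⁻ (𝓕 (acorr gfun)) (-ω) = acorr gfun (-ω) :=
      (integrable_acorr hg1).fourierInv_fourier_eq (integrable_fourier_acorr hg1 hg2)
        ((continuous_acorr hg2).continuousAt)
    rw [← h1, Real.fourierInv_eq_fourier_neg]
    norm_num
  rw [hinv, acorr]
  have hsub : (∫ t : ℝ, gfun (t - ω) * (starRingEnd ℂ) (gfun ((t - ω) - -ω)))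
      = ∫ t : ℝ, gfun t * (starRingEnd ℂ) (gfun (t - -ω)) :=
    MeasureTheory.integral_sub_right_eq_self
      (fun t => gfun t * (starRingEnd ℂ) (gfun (t - -ω))) ω
  rw [← hsub]
  refine integral_congr_ae (Filter.Eventually.of_forall fun t => ?_)
  dsimp only
  have ht : t - ω - -ω = t := by ring
  rw [ht]
  simp only [hgfun]
  have h1 : t - ω - x = t - x - ω := by ring
  rw [h1]
  simp only [map_mul, Complex.conj_ofReal, Complex.conj_conj]
  ring
end

section
/- If f ∈ L²(ℝ) is supported in [−c/2, c/2] for some c > 0, then for every fixed x ∈ ℝ, the function ω ↦ |Gf(x,ω)|² belongs to the Paley–Wiener space PW²_{2c}(ℝ), i.e. it is in L²(ℝ) and its Fourier transform is supported in [−c, c]. -/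
open MeasureTheory Complex

open FourierTransform Real Filter Pointwise

set_option maxHeartbeats 1000000

noncomputable def efn (r : ℝ) : ℂ := Complex.exp ((-2 * Real.pi * r : ℝ) * Complex.I)

lemma efn_add (a b : ℝ) : efn (a + b) = efn a * efn b := by
  rw [efn, efn, efn, ← Complex.exp_add]
  congr 1
  push_cast
  ring

lemma efn_norm (r : ℝ) : ‖efn r‖ = 1 := by
  rw [efn]
  rw [Complex.norm_exp_ofReal_mul_I]

lemma efn_conj (r : ℝ) : (starRingEnd ℂ) (efn r) = efn (-r) := by
  rw [efn, efn, ← Complex.exp_conj, map_mul, Complex.conj_I, Complex.conj_ofReal]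
  congr 1
  push_cast
  ring

lemma ofReal_norm_eq_coe_nnnorm {E : Type*} [SeminormedAddCommGroup E] (a : E) :
    ENNReal.ofReal ‖a‖ = (‖a‖₊ : ENNReal) := by
  simp [enorm]

lemma efn_continuous : Continuous efn := by
  unfold efn; fun_prop

lemma fourier_eq (f : ℝ → ℂ) (w : ℝ) : 𝓕 f w = ∫ v : ℝ, efn (v * w) * f v := by
  rw [Real.fourier_real_eq_integral_exp_smul]
  congr 1
  ext v
  rw [smul_eq_mul, efn]
  congr 2
  push_cast
  ring

lemma fourier_conj_neg (g : ℝ → ℂ) (ω : ℝ) :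
    𝓕 (fun v => (starRingEnd ℂ) (g (-v))) ω = (starRingEnd ℂ) (𝓕 g ω) := by
  rw [_root_.fourier_eq, _root_.fourier_eq, ← integral_conj,
    ← integral_neg_eq_self (fun v => efn (v * ω) * (starRingEnd ℂ) (g (-v))) volume]
  congr 1
  ext v
  rw [map_mul, efn_conj, neg_neg]
  congr 2
  ring

lemma fourier_conv (g k : ℝ → ℂ) (hg : Integrable g volume) (hk : Integrable k volume) (ω : ℝ) :
    𝓕 (convolution g k (ContinuousLinearMap.mul ℝ ℂ) volume) ω = 𝓕 g ω * 𝓕 k ω := by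
  have hmeas : AEStronglyMeasurable
      (Function.uncurry fun (u t : ℝ) => efn (u * ω) * (g t * k (u - t)))
      (volume.prod volume) := by
    apply AEStronglyMeasurable.mul
    · exact (efn_continuous.comp (continuous_fst.mul continuous_const)).aestronglyMeasurable
    · have := hg.aestronglyMeasurable.convolution_integrand (ContinuousLinearMap.mul ℝ ℂ)
        hk.aestronglyMeasurable
      simpa [Function.uncurry] using this
  have hint : Integrable (Function.uncurry fun (u t : ℝ) => efn (u * ω) * (g t * k (u - t)))
      (volume.prod volume) := by
    have hbase : Integrable (fun p : ℝ × ℝ => g p.2 * k (p.1 - p.2)) (volume.prod volume) := by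
      have := hg.convolution_integrand (ContinuousLinearMap.mul ℝ ℂ) hk
      simpa using this
    apply hbase.norm.mono' hmeas
    filter_upwards with p
    simp only [Function.uncurry]
    rw [norm_mul, efn_norm, one_mul]
  calc 𝓕 (convolution g k (ContinuousLinearMap.mul ℝ ℂ) volume) ω
      = ∫ u : ℝ, ∫ t : ℝ, efn (u * ω) * (g t * k (u - t)) := by
        rw [_root_.fourier_eq]
        congr 1; ext u
        rw [convolution_def, ← integral_const_mul]
        simp
    _ = ∫ t : ℝ, ∫ u : ℝ, efn (u * ω) * (g t * k (u - t)) := integral_integral_swap hint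
    _ = ∫ t : ℝ, (efn (t * ω) * g t) * 𝓕 k ω := by
        congr 1; ext t
        have : ∫ u : ℝ, efn (u * ω) * (g t * k (u - t))
            = ∫ v : ℝ, efn ((v + t) * ω) * (g t * k v) := by
          rw [← integral_add_right_eq_self (fun u => efn (u * ω) * (g t * k (u - t))) t]
          simp
        rw [this]
        have h2 : ∀ v : ℝ, efn ((v + t) * ω) * (g t * k v)
            = (efn (t * ω) * g t) * (efn (v * ω) * k v) := by
          intro v
          have : (v + t) * ω = v * ω + t * ω := by ring
          rw [this, efn_add]
          ring
        simp_rw [h2]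
        rw [integral_const_mul, _root_.fourier_eq]
    _ = 𝓕 g ω * 𝓕 k ω := by
        rw [integral_mul_const, ← _root_.fourier_eq]

lemma gauss_cexp_eq (ε ω : ℝ) :
    Complex.exp (-(Real.pi : ℂ) * (ε : ℂ) * (ω : ℂ)^2) = ((Real.exp (-Real.pi * ε * ω^2) : ℝ) : ℂ) := by
  rw [Complex.ofReal_exp]
  congr 1
  push_cast
  ring

lemma sq_norm_eq (z : ℂ) : ((‖z‖^2 : ℝ) : ℂ) = z * (starRingEnd ℂ) z := by
  rw [Complex.mul_conj]
  congr 1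
  rw [Complex.sq_norm]

lemma plancherel_aux (g : ℝ → ℂ) (hg1 : Integrable g volume) (hg2 : MemLp g 2 volume)
    (ε : ℝ) (hε : 0 < ε) :
    ∫ ω : ℝ, ‖𝓕 g ω‖^2 * Real.exp (-Real.pi * ε * ω^2) ≤ ∫ t : ℝ, ‖g t‖^2 := by
  set Gc : ℝ → ℂ := fun ω => Complex.exp (-(Real.pi : ℂ) * (ε : ℂ) * (ω : ℂ)^2) with hGc
  set K : ℝ → ℂ := fun u => 𝓕 Gc u with hKdef
  set k : ℝ → ℝ := fun u => (Real.sqrt ε)⁻¹ * Real.exp (-(Real.pi/ε) * u^2) with hkdef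
  have hsqrt : (0:ℝ) < Real.sqrt ε := Real.sqrt_pos.mpr hε
  have hK : K = fun t : ℝ => 1 / (ε:ℂ) ^ (1/2 : ℂ) * Complex.exp (-(Real.pi:ℂ) / ε * (t:ℂ)^2) := by
    rw [hKdef, hGc]
    exact fourier_gaussian_pi (by simpa using hε)
  have hsqrtC : ((Real.sqrt ε : ℝ) : ℂ) = (ε:ℂ) ^ (1/2 : ℂ) := by
    rw [Real.sqrt_eq_rpow, Complex.ofReal_cpow hε.le]
    norm_num
  have hKnorm : ∀ u : ℝ, ‖K u‖ = k u := by
    intro u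
    rw [hK]
    simp only [norm_mul, norm_div, norm_one, ← hsqrtC]
    rw [show (-(Real.pi:ℂ)/ε * (u:ℂ)^2) = ((-(Real.pi/ε) * u^2 : ℝ) : ℂ) by push_cast; ring]
    rw [Complex.norm_real, Complex.norm_exp]
    simp [hkdef, _root_.abs_of_nonneg hsqrt.le, one_div, ← Complex.ofReal_pow]
  have hk_nonneg : ∀ u, 0 ≤ k u := fun u => by positivity
  have hk_int : Integrable k volume := (integrable_exp_neg_mul_sq (div_pos Real.pi_pos hε)).const_mul _
  have hk_total : ∫ u : ℝ, k u = 1 := by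
    rw [hkdef]
    simp only
    rw [integral_const_mul, integral_gaussian]
    rw [show Real.pi / (Real.pi / ε) = ε by field_simp]
    exact inv_mul_cancel₀ hsqrt.ne'
  -- pointwise expansion of |F g|^2
  have step2 : ∀ ω : ℝ, 𝓕 g ω * (starRingEnd ℂ) (𝓕 g ω)
      = ∫ p : ℝ × ℝ, (efn (p.1 * ω) * g p.1) * (starRingEnd ℂ) (efn (p.2 * ω) * g p.2)
        ∂(volume.prod volume) := by
    intro ω
    calc 𝓕 g ω * (starRingEnd ℂ) (𝓕 g ω)
        = (∫ t : ℝ, efn (t * ω) * g t) * ∫ s : ℝ, (starRingEnd ℂ) (efn (s * ω) * g s) := by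
          rw [integral_conj, _root_.fourier_eq]
      _ = ∫ p : ℝ × ℝ, (efn (p.1 * ω) * g p.1) * (starRingEnd ℂ) (efn (p.2 * ω) * g p.2)
            ∂(volume.prod volume) :=
          (integral_prod_mul (fun t => efn (t * ω) * g t)
            (fun s => (starRingEnd ℂ) (efn (s * ω) * g s))).symm
  have step3 : ∀ (ω : ℝ) (p : ℝ × ℝ),
      ((efn (p.1 * ω) * g p.1) * (starRingEnd ℂ) (efn (p.2 * ω) * g p.2)) * Gc ω
        = (g p.1 * (starRingEnd ℂ) (g p.2)) * (efn ((p.1 - p.2) * ω) * Gc ω) := by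
    intro ω p
    rw [map_mul, efn_conj, show (p.1 - p.2) * ω = p.1 * ω + -(p.2 * ω) by ring, efn_add]
    ring
  set Φ : ℝ → ℝ × ℝ → ℂ :=
    fun ω p => (g p.1 * (starRingEnd ℂ) (g p.2)) * (efn ((p.1 - p.2) * ω) * Gc ω) with hΦ
  have hΦmeas : AEStronglyMeasurable (Function.uncurry Φ) (volume.prod (volume.prod volume)) := by
    apply AEStronglyMeasurable.mul
    · apply AEStronglyMeasurable.mul
      · exact hg1.aestronglyMeasurable.comp_fst.comp_snd
      · exact Complex.continuous_conj.comp_aestronglyMeasurable hg1.aestronglyMeasurable.comp_snd.comp_snd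
    · apply Continuous.aestronglyMeasurable
      apply Continuous.mul
      · exact efn_continuous.comp (by fun_prop)
      · exact Complex.continuous_exp.comp (by fun_prop)
  have hΦint : Integrable (Function.uncurry Φ) (volume.prod (volume.prod volume)) := by
    have hD : Integrable (fun q : ℝ × ℝ × ℝ =>
        Real.exp (-(Real.pi * ε) * q.1^2) * (‖g q.2.1‖ * ‖g q.2.2‖)) (volume.prod (volume.prod volume)) :=
      (integrable_exp_neg_mul_sq (by positivity)).mul_prod (hg1.norm.mul_prod hg1.norm)
    have hgc : ∀ ω : ℝ, ‖Gc ω‖ = Real.exp (-(Real.pi * ε) * ω^2) := by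
      intro ω
      rw [hGc]
      simp only [gauss_cexp_eq]
      rw [Complex.norm_real, Real.norm_eq_abs, _root_.abs_of_nonneg (Real.exp_nonneg _),
        show -Real.pi * ε * ω^2 = -(Real.pi * ε) * ω^2 by ring]
    apply hD.mono' hΦmeas
    filter_upwards with q
    show ‖Φ q.1 q.2‖ ≤ _
    rw [hΦ]
    simp only [norm_mul, RCLike.norm_conj, efn_norm, hgc]
    exact le_of_eq (by ring)
  have hswap := integral_integral_swap hΦint
  have hcplx : ∫ ω : ℝ, ((‖𝓕 g ω‖^2 * Real.exp (-Real.pi * ε * ω^2) : ℝ) : ℂ)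
      = ∫ p : ℝ × ℝ, (g p.1 * (starRingEnd ℂ) (g p.2)) * K (p.1 - p.2) ∂(volume.prod volume) := by
    calc ∫ ω : ℝ, ((‖𝓕 g ω‖^2 * Real.exp (-Real.pi * ε * ω^2) : ℝ) : ℂ)
        = ∫ ω : ℝ, ∫ p : ℝ × ℝ, Φ ω p ∂(volume.prod volume) := by
          congr 1; ext ω
          rw [Complex.ofReal_mul, sq_norm_eq, ← gauss_cexp_eq, step2 ω, ← integral_mul_const]
          congr 1; ext p
          exact step3 ω p
      _ = ∫ p : ℝ × ℝ, (∫ ω : ℝ, Φ ω p) ∂(volume.prod volume) := hswap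
      _ = ∫ p : ℝ × ℝ, (g p.1 * (starRingEnd ℂ) (g p.2)) * K (p.1 - p.2) ∂(volume.prod volume) := by
          congr 1; ext p
          rw [hΦ]
          simp only
          rw [integral_const_mul]
          congr 1
          have harg : ∀ ω : ℝ, efn ((p.1 - p.2) * ω) = efn (ω * (p.1 - p.2)) := by
            intro ω; rw [mul_comm]
          simp_rw [harg]
          rw [hKdef]
          show (∫ a : ℝ, efn (a * (p.1 - p.2)) * Gc a) = 𝓕 Gc (p.1 - p.2)
          rw [_root_.fourier_eq]
  have hnn : ∀ ω : ℝ, 0 ≤ ‖𝓕 g ω‖^2 * Real.exp (-Real.pi * ε * ω^2) := fun ω => by positivity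
  have h1 : ∫ ω : ℝ, ‖𝓕 g ω‖^2 * Real.exp (-Real.pi * ε * ω^2)
      = ‖∫ p : ℝ × ℝ, (g p.1 * (starRingEnd ℂ) (g p.2)) * K (p.1 - p.2) ∂(volume.prod volume)‖ := by
    rw [← hcplx]
    have hco : ∫ ω : ℝ, ((‖𝓕 g ω‖^2 * Real.exp (-Real.pi * ε * ω^2) : ℝ) : ℂ)
        = (((∫ ω : ℝ, ‖𝓕 g ω‖^2 * Real.exp (-Real.pi * ε * ω^2)) : ℝ) : ℂ) := by
      exact integral_ofReal
    rw [hco, Complex.norm_real, Real.norm_eq_abs,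
      _root_.abs_of_nonneg (integral_nonneg hnn)]
  have hgsq : Integrable (fun t => ‖g t‖^2) volume := by
    have h := hg2.integrable_norm_rpow (by norm_num) (by norm_num)
    simpa [Real.rpow_natCast] using h
  have hM2 : Integrable (fun p : ℝ × ℝ => ‖g p.2‖^2 * k (p.1 - p.2)) (volume.prod volume) := by
    have := hgsq.convolution_integrand (ContinuousLinearMap.mul ℝ ℝ) hk_int
    simpa using this
  have keven : ∀ a b : ℝ, k (a - b) = k (b - a) := by
    intro a b
    rw [hkdef]
    simp only
    rw [show -(Real.pi/ε) * (a-b)^2 = -(Real.pi/ε) * (b-a)^2 by ring]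
  have hM1 : Integrable (fun p : ℝ × ℝ => ‖g p.1‖^2 * k (p.1 - p.2)) (volume.prod volume) := by
    have h := hM2.swap
    exact h.congr (Filter.Eventually.of_forall fun p => by
      simp only [Function.comp, Prod.fst_swap, Prod.snd_swap]
      rw [keven])
  have hkcont : Continuous k := by
    rw [hkdef]; fun_prop
  have hAmeas : AEStronglyMeasurable
      (fun p : ℝ × ℝ => (‖g p.1‖ * ‖g p.2‖) * k (p.1 - p.2)) (volume.prod volume) :=
    ((hg1.aestronglyMeasurable.norm.comp_fst.mul hg1.aestronglyMeasurable.norm.comp_snd)).mul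
      ((hkcont.comp (continuous_fst.sub continuous_snd)).aestronglyMeasurable)
  have hAM : ∀ p : ℝ × ℝ, (‖g p.1‖ * ‖g p.2‖) * k (p.1 - p.2)
      ≤ (1/2) * (‖g p.1‖^2 * k (p.1 - p.2) + ‖g p.2‖^2 * k (p.1 - p.2)) := by
    intro p
    nlinarith [mul_nonneg (sq_nonneg (‖g p.1‖ - ‖g p.2‖)) (hk_nonneg (p.1 - p.2))]
  have hMaj : Integrable (fun p : ℝ × ℝ =>
      (1/2) * (‖g p.1‖^2 * k (p.1 - p.2) + ‖g p.2‖^2 * k (p.1 - p.2))) (volume.prod volume) :=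
    (hM1.add hM2).const_mul _
  have hAint : Integrable (fun p : ℝ × ℝ => (‖g p.1‖ * ‖g p.2‖) * k (p.1 - p.2))
      (volume.prod volume) := by
    apply hMaj.mono' hAmeas
    filter_upwards with p
    rw [Real.norm_eq_abs, _root_.abs_of_nonneg (by positivity)]
    exact hAM p
  have hI1 : ∫ p : ℝ × ℝ, ‖g p.1‖^2 * k (p.1 - p.2) ∂(volume.prod volume)
      = ∫ t : ℝ, ‖g t‖^2 := by
    rw [MeasureTheory.integral_prod _ hM1]
    congr 1; ext t
    show (∫ y : ℝ, ‖g t‖^2 * k (t - y)) = ‖g t‖^2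
    rw [integral_const_mul, integral_sub_left_eq_self k volume t, hk_total, mul_one]
  have hI2 : ∫ p : ℝ × ℝ, ‖g p.2‖^2 * k (p.1 - p.2) ∂(volume.prod volume)
      = ∫ t : ℝ, ‖g t‖^2 := by
    have hfs : (fun p : ℝ × ℝ => ‖g p.2‖^2 * k (p.1 - p.2))
        = fun p : ℝ × ℝ => ‖g (p.swap).1‖^2 * k ((p.swap).1 - (p.swap).2) := by
      ext p
      simp only [Prod.fst_swap, Prod.snd_swap]
      rw [keven]
    rw [hfs]
    exact (MeasureTheory.integral_prod_swap
      (fun q : ℝ × ℝ => ‖g q.1‖^2 * k (q.1 - q.2))).trans hI1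
  have h2 : ‖∫ p : ℝ × ℝ, (g p.1 * (starRingEnd ℂ) (g p.2)) * K (p.1 - p.2) ∂(volume.prod volume)‖
      ≤ ∫ p : ℝ × ℝ, (‖g p.1‖ * ‖g p.2‖) * k (p.1 - p.2) ∂(volume.prod volume) := by
    refine (norm_integral_le_integral_norm _).trans_eq ?_
    congr 1; ext p
    rw [norm_mul, norm_mul, RCLike.norm_conj, hKnorm]
  calc ∫ ω : ℝ, ‖𝓕 g ω‖^2 * Real.exp (-Real.pi * ε * ω^2)
      = ‖∫ p : ℝ × ℝ, (g p.1 * (starRingEnd ℂ) (g p.2)) * K (p.1 - p.2)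
          ∂(volume.prod volume)‖ := h1
    _ ≤ ∫ p : ℝ × ℝ, (‖g p.1‖ * ‖g p.2‖) * k (p.1 - p.2) ∂(volume.prod volume) := h2
    _ ≤ ∫ p : ℝ × ℝ, (1/2) * (‖g p.1‖^2 * k (p.1 - p.2) + ‖g p.2‖^2 * k (p.1 - p.2))
          ∂(volume.prod volume) := integral_mono hAint hMaj hAM
    _ = ∫ t : ℝ, ‖g t‖^2 := by
        rw [integral_const_mul, integral_add hM1 hM2, hI1, hI2]
        ring

lemma fourier_continuous (g : ℝ → ℂ) (hg1 : Integrable g volume) : Continuous (𝓕 g) :=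
  VectorFourier.fourierIntegral_continuous Real.continuous_fourierChar
    (by exact continuous_inner) hg1

lemma fourier_bound (g : ℝ → ℂ) (ω : ℝ) : ‖𝓕 g ω‖ ≤ ∫ t : ℝ, ‖g t‖ :=
  VectorFourier.norm_fourierIntegral_le_integral_norm _ _ _ _ _

lemma plancherel_bound (g : ℝ → ℂ) (hg1 : Integrable g volume) (hg2 : MemLp g 2 volume) :
    ∫⁻ ω : ℝ, (‖𝓕 g ω‖₊ : ENNReal) ^ (2:ℕ) ≤ ENNReal.ofReal (∫ t : ℝ, ‖g t‖^2) := by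
  have hcont : Continuous (𝓕 g) := fourier_continuous g hg1
  set F : ℕ → ℝ → ENNReal :=
    fun n ω => ENNReal.ofReal (‖𝓕 g ω‖^2 * Real.exp (-Real.pi * (1/(n+1)) * ω^2)) with hF
  have hFmeas : ∀ n, Measurable (F n) := by
    intro n
    apply ENNReal.measurable_ofReal.comp
    apply Measurable.mul
    · exact (hcont.norm.pow 2).measurable
    · fun_prop
  have hlim : ∀ ω : ℝ, Tendsto (fun n : ℕ => F n ω) atTop
      (nhds (ENNReal.ofReal (‖𝓕 g ω‖^2))) := by
    intro ω
    apply ENNReal.continuous_ofReal.continuousAt.tendsto.comp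
    have h1 : Tendsto (fun n : ℕ => -Real.pi * (1/(n+1)) * ω^2) atTop (nhds 0) := by
      have h0 : Tendsto (fun n : ℕ => 1/((n:ℝ)+1)) atTop (nhds 0) :=
        tendsto_one_div_add_atTop_nhds_zero_nat
      have := (h0.const_mul (-Real.pi)).mul_const (ω^2)
      simpa using this
    have h2 : Tendsto (fun n : ℕ => Real.exp (-Real.pi * (1/(n+1)) * ω^2)) atTop (nhds 1) := by
      simpa [Function.comp_def] using (Real.continuous_exp.continuousAt.tendsto.comp h1)
    have := h2.const_mul (‖𝓕 g ω‖^2)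
    simpa using this
  have hpt : ∀ ω : ℝ, (‖𝓕 g ω‖₊ : ENNReal) ^ (2:ℕ)
      = liminf (fun n : ℕ => F n ω) atTop := by
    intro ω
    rw [(hlim ω).liminf_eq]
    rw [← ofReal_norm_eq_coe_nnnorm, ← ENNReal.ofReal_pow (norm_nonneg _)]
  calc ∫⁻ ω : ℝ, (‖𝓕 g ω‖₊ : ENNReal) ^ (2:ℕ)
      = ∫⁻ ω : ℝ, liminf (fun n : ℕ => F n ω) atTop := by
        apply lintegral_congr
        exact hpt
    _ ≤ liminf (fun n : ℕ => ∫⁻ ω : ℝ, F n ω) atTop := lintegral_liminf_le hFmeas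
    _ ≤ ENNReal.ofReal (∫ t : ℝ, ‖g t‖^2) := by
        have hbound : ∀ n : ℕ, ∫⁻ ω : ℝ, F n ω ≤ ENNReal.ofReal (∫ t : ℝ, ‖g t‖^2) := by
          intro n
          have hipos : (0:ℝ) < 1/(n+1) := by positivity
          have hint : Integrable
              (fun ω : ℝ => ‖𝓕 g ω‖^2 * Real.exp (-Real.pi * (1/(n+1)) * ω^2)) volume := by
            have hgauss : Integrable
                (fun ω : ℝ => Real.exp (-(Real.pi * (1/(n+1))) * ω^2)) volume :=
              integrable_exp_neg_mul_sq (by positivity)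
            set M : ℝ := ∫ t : ℝ, ‖g t‖ with hM
            have hM0 : 0 ≤ M := integral_nonneg fun t => norm_nonneg _
            apply ((hgauss.const_mul (M^2)).mono'
              (((hcont.norm.pow 2).mul (by fun_prop)).aestronglyMeasurable))
            filter_upwards with ω
            simp only [Pi.mul_apply, Pi.pow_apply]
            rw [Real.norm_eq_abs, _root_.abs_of_nonneg (by positivity :
              (0:ℝ) ≤ ‖𝓕 g ω‖^2 * Real.exp (-Real.pi * (1/(n+1)) * ω^2))]
            have h1 : ‖𝓕 g ω‖^2 ≤ M^2 := by
              have := fourier_bound g ω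
              nlinarith [norm_nonneg (𝓕 g ω)]
            have h2 : (0:ℝ) < Real.exp (-Real.pi * (1/(n+1)) * ω^2) := Real.exp_pos _
            calc ‖𝓕 g ω‖^2 * Real.exp (-Real.pi * (1/(n+1)) * ω^2)
                ≤ M^2 * Real.exp (-Real.pi * (1/(n+1)) * ω^2) := by nlinarith
              _ = M^2 * Real.exp (-(Real.pi * (1/(n+1))) * ω^2) := by ring_nf
          rw [hF]
          rw [← ofReal_integral_eq_lintegral_ofReal hint
            (Filter.Eventually.of_forall fun ω => by positivity)]
          exact ENNReal.ofReal_le_ofReal (plancherel_aux g hg1 hg2 _ hipos)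
        refine le_trans (liminf_le_liminf (f := (atTop : Filter ℕ))
          (Filter.Eventually.of_forall hbound)) ?_
        rw [liminf_const]

lemma gabor_eq (f : ℝ → ℂ) (x ω : ℝ) :
    gaborTransform f x ω = 𝓕 (fun t => f t * (Real.exp (-Real.pi * (t - x)^2) : ℂ)) ω := by
  rw [_root_.fourier_eq, gaborTransform]
  congr 1; ext t
  rw [efn, show ((-2 * Real.pi * (t * ω) : ℝ) : ℂ) * Complex.I
    = -2 * Real.pi * Complex.I * t * ω by push_cast; ring]
  ring

/-- If `f ∈ L²` is supported in `[-c/2, c/2]`, then for every `x` the function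
`ω ↦ |Gf(x,ω)|²` lies in the Paley–Wiener space `PW²_{2c}`: it is in `L²` and its
Fourier transform vanishes outside `[-c, c]`. -/
theorem spectrogram_mem_paleyWiener (c : ℝ) (hc : 0 < c) (f : ℝ → ℂ)
    (hf : MemLp f 2 volume)
    (hsupp : ∀ t : ℝ, t ∉ Set.Icc (-(c/2)) (c/2) → f t = 0) (x : ℝ) :
    MemLp (fun ω : ℝ => ((‖gaborTransform f x ω‖^2 : ℝ) : ℂ)) 2 volume ∧
      ∀ ξ : ℝ, ξ ∉ Set.Icc (-c) c →
        FourierTransform.fourier (fun ω : ℝ => ((‖gaborTransform f x ω‖^2 : ℝ) : ℂ)) ξ = 0 := by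
  set g : ℝ → ℂ := fun t => f t * (Real.exp (-Real.pi * (t - x)^2) : ℂ) with hgdef
  have hgmeas : AEStronglyMeasurable g volume :=
    hf.aestronglyMeasurable.mul
      (Complex.continuous_ofReal.comp (by fun_prop)).aestronglyMeasurable
  have hg2 : MemLp g 2 volume := by
    apply hf.of_le hgmeas
    filter_upwards with t
    rw [hgdef]
    simp only [norm_mul, Complex.norm_real, Real.norm_eq_abs,
      _root_.abs_of_nonneg (Real.exp_nonneg _)]
    refine mul_le_of_le_one_right (norm_nonneg _) ?_
    rw [Real.exp_le_one_iff]
    nlinarith [sq_nonneg (t - x), Real.pi_pos]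
  have hgsupp : ∀ t : ℝ, t ∉ Set.Icc (-(c/2)) (c/2) → g t = 0 := by
    intro t ht
    rw [hgdef]
    simp [hsupp t ht]
  have hg1 : Integrable g volume := by
    rw [← memLp_one_iff_integrable]
    exact hg2.mono_exponent_of_measure_support_ne_top hgsupp
      measure_Icc_lt_top.ne one_le_two
  have hfuneq : (fun ω : ℝ => ((‖gaborTransform f x ω‖^2 : ℝ) : ℂ))
      = fun ω : ℝ => ((‖𝓕 g ω‖^2 : ℝ) : ℂ) := by
    ext ω
    rw [gabor_eq f x ω]
  have hcont : Continuous (𝓕 g) := fourier_continuous g hg1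
  set M : ℝ := ∫ t : ℝ, ‖g t‖ with hM
  have hMb : ∀ ω, ‖𝓕 g ω‖ ≤ M := fun ω => fourier_bound g ω
  have hL2 : ∫⁻ ω : ℝ, (‖𝓕 g ω‖₊ : ENNReal) ^ (2:ℕ) < ⊤ :=
    lt_of_le_of_lt (plancherel_bound g hg1 hg2) ENNReal.ofReal_lt_top
  have hFg2 : MemLp (𝓕 g) 2 volume := by
    refine ⟨hcont.aestronglyMeasurable, ?_⟩
    rw [eLpNorm_eq_lintegral_rpow_enorm_toReal (by norm_num) (by norm_num)]
    apply ENNReal.rpow_lt_top_of_nonneg (by norm_num)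
    have h2 : (2 : ENNReal).toReal = (2:ℝ) := by norm_num
    rw [h2]
    have heq : ∀ ω : ℝ, (‖𝓕 g ω‖₊ : ENNReal) ^ (2:ℝ) = (‖𝓕 g ω‖₊ : ENNReal) ^ (2:ℕ) := by
      intro ω
      rw [← ENNReal.rpow_natCast]
      norm_num
    simp only [enorm_eq_nnnorm]
    rw [lintegral_congr heq]
    exact hL2.ne
  constructor
  · rw [hfuneq]
    refine MemLp.of_le_mul (c := M) hFg2 ?_ ?_
    · exact (Complex.continuous_ofReal.comp (hcont.norm.pow 2)).aestronglyMeasurable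
    · filter_upwards with ω
      rw [Complex.norm_real, Real.norm_eq_abs, _root_.abs_of_nonneg (by positivity)]
      calc ‖𝓕 g ω‖^2 = ‖𝓕 g ω‖ * ‖𝓕 g ω‖ := sq (‖𝓕 g ω‖) ▸ (by ring)
        _ ≤ M * ‖𝓕 g ω‖ := mul_le_mul_of_nonneg_right (hMb ω) (norm_nonneg _)
  · intro ξ hξ
    rw [hfuneq]
    set g₂ : ℝ → ℂ := fun v => (starRingEnd ℂ) (g (-v)) with hg₂def
    have hn : Integrable (fun t : ℝ => g (-t)) volume := hg1.comp_neg
    have hg₂1 : Integrable g₂ volume := by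
      apply hn.norm.mono'
        (Complex.continuous_conj.comp_aestronglyMeasurable hn.aestronglyMeasurable)
      filter_upwards with v
      exact le_of_eq (RCLike.norm_conj _)
    set h : ℝ → ℂ := convolution g g₂ (ContinuousLinearMap.mul ℝ ℂ) volume with hhdef
    have hh1 : Integrable h volume :=
      hg1.integrable_convolution (ContinuousLinearMap.mul ℝ ℂ) hg₂1
    have hg_supp : Function.support g ⊆ Set.Icc (-(c/2)) (c/2) := by
      intro t ht
      by_contra hmem
      exact ht (hgsupp t hmem)
    have hg₂_supp : Function.support g₂ ⊆ Set.Icc (-(c/2)) (c/2) := by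
      intro v hv
      have hne : g (-v) ≠ 0 := by
        intro h0
        apply hv
        rw [hg₂def]
        simp [h0]
      have hmem : -v ∈ Set.Icc (-(c/2)) (c/2) := by
        by_contra hnn
        exact hne (hgsupp _ hnn)
      simp only [Set.mem_Icc] at hmem ⊢
      constructor <;> linarith [hmem.1, hmem.2]
    have hh_supp : ∀ u : ℝ, u ∉ Set.Icc (-c) c → h u = 0 := by
      intro u hu
      by_contra h0
      have hu1 : u ∈ Function.support h := h0
      have hu2 : u ∈ Function.support g + Function.support g₂ := by
        rw [hhdef] at hu1
        exact support_convolution_subset _ hu1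
      have hu3 : u ∈ Set.Icc (-(c/2)) (c/2) + Set.Icc (-(c/2)) (c/2) :=
        Set.add_subset_add hg_supp hg₂_supp hu2
      rw [Set.Icc_add_Icc (by linarith) (by linarith)] at hu3
      rw [show -(c/2) + -(c/2) = -c by ring, show c/2 + c/2 = c by ring] at hu3
      exact hu hu3
    have h𝓕h : 𝓕 h = fun ω : ℝ => ((‖𝓕 g ω‖^2 : ℝ) : ℂ) := by
      ext ω
      rw [hhdef, fourier_conv g g₂ hg1 hg₂1 ω, hg₂def, fourier_conj_neg g ω, ← sq_norm_eq]
    have hnn_eq : ∀ ω : ℝ, (‖(((‖𝓕 g ω‖^2 : ℝ)) : ℂ)‖₊ : ENNReal)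
        = (‖𝓕 g ω‖₊ : ENNReal) ^ (2:ℕ) := by
      intro ω
      rw [Complex.nnnorm_real, ← ofReal_norm_eq_coe_nnnorm, Real.norm_eq_abs,
        _root_.abs_of_nonneg (by positivity), ENNReal.ofReal_pow (norm_nonneg _),
        ofReal_norm_eq_coe_nnnorm]
    have hInt𝓕h : Integrable (𝓕 h) volume := by
      rw [h𝓕h]
      refine ⟨(Complex.continuous_ofReal.comp (hcont.norm.pow 2)).aestronglyMeasurable, ?_⟩
      show (∫⁻ ω : ℝ, (‖(((‖𝓕 g ω‖^2 : ℝ)) : ℂ)‖₊ : ENNReal)) < ⊤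
      rw [lintegral_congr hnn_eq]
      exact hL2
    have hmemc : -ξ ∈ (Set.Icc (-c) c)ᶜ := by
      simp only [Set.mem_compl_iff, Set.mem_Icc, not_and_or, not_le] at hξ ⊢
      rcases hξ with hl | hl
      · right; linarith
      · left; linarith
    have hcontAt : ContinuousAt h (-ξ) := by
      have hopen : IsOpen ((Set.Icc (-c) c)ᶜ : Set ℝ) := isClosed_Icc.isOpen_compl
      have hev : h =ᶠ[nhds (-ξ)] (fun _ => (0:ℂ)) :=
        Filter.eventuallyEq_of_mem (hopen.mem_nhds hmemc) (fun u hu => hh_supp u hu)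
      exact ContinuousAt.congr continuousAt_const hev.symm
    have hinv : 𝓕 (𝓕 h) ξ = h (-ξ) := by
      have hneg := Real.fourierInv_eq_fourier_neg (𝓕 h) (-ξ)
      rw [neg_neg] at hneg
      rw [← hneg]
      exact hh1.fourierInv_fourier_eq hInt𝓕h hcontAt
    calc FourierTransform.fourier (fun ω : ℝ => ((‖𝓕 g ω‖^2 : ℝ) : ℂ)) ξ
        = 𝓕 (𝓕 h) ξ := by rw [h𝓕h]
      _ = h (-ξ) := hinv
      _ = 0 := hh_supp _ hmemc
end

section
/- Let f, h : ℝ → ℂ be measurable functions such that (T_ω f)·conj(f) = (T_ω h)·conj(h) almost everywhere for every ω ∈ ℝ. Then there exists τ ∈ ℂ with |τ| = 1 such that f = τ·h almost everywhere, or both f and h vanish almost everywhere. -/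
open MeasureTheory Complex

/-- If `(T_ω f)·conj(f) = (T_ω h)·conj(h)` a.e. for every `ω ∈ ℝ`, then `f = τ·h`
a.e. for some unimodular `τ`, or both `f` and `h` vanish a.e. -/
theorem phase_from_correlations (f h : ℝ → ℂ) (hf : Measurable f) (hh : Measurable h)
    (H : ∀ ω : ℝ, ∀ᵐ t : ℝ, f (t - ω) * starRingEnd ℂ (f t) =
      h (t - ω) * starRingEnd ℂ (h t)) :
    (∃ τ : ℂ, ‖τ‖ = 1 ∧ ∀ᵐ t : ℝ, f t = τ * h t) ∨
      ((∀ᵐ t : ℝ, f t = 0) ∧ (∀ᵐ t : ℝ, h t = 0)) := by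
  have hconj : Measurable (fun z : ℂ => starRingEnd ℂ z) := continuous_star.measurable
  -- from ω = 0 : |f t|² = |h t|² a.e.
  have hnorm : ∀ᵐ t : ℝ, Complex.normSq (f t) = Complex.normSq (h t) := by
    filter_upwards [H 0] with t ht
    simp only [sub_zero] at ht
    have : (Complex.normSq (f t) : ℂ) = (Complex.normSq (h t) : ℂ) := by
      rw [← Complex.mul_conj, ← Complex.mul_conj]; exact ht
    exact_mod_cast this
  by_cases hf0 : ∀ᵐ t : ℝ, f t = 0
  · right
    refine ⟨hf0, ?_⟩
    filter_upwards [hnorm, hf0] with t ht hft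
    have : Complex.normSq (h t) = 0 := by rw [← ht, hft]; simp
    exact Complex.normSq_eq_zero.mp this
  · left
    -- the equality set in the product
    have hmeasE : MeasurableSet {p : ℝ × ℝ |
        f (p.2 - p.1) * starRingEnd ℂ (f p.2) = h (p.2 - p.1) * starRingEnd ℂ (h p.2)} := by
      apply measurableSet_eq_fun
      · exact (hf.comp (measurable_snd.sub measurable_fst)).mul
          (hconj.comp (hf.comp measurable_snd))
      · exact (hh.comp (measurable_snd.sub measurable_fst)).mul
          (hconj.comp (hh.comp measurable_snd))
    have hprod : ∀ᵐ p : ℝ × ℝ ∂(volume : Measure ℝ).prod volume,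
        f (p.2 - p.1) * starRingEnd ℂ (f p.2) = h (p.2 - p.1) * starRingEnd ℂ (h p.2) := by
      have hc : MeasurableSet {p : ℝ × ℝ |
          ¬ (f (p.2 - p.1) * starRingEnd ℂ (f p.2) = h (p.2 - p.1) * starRingEnd ℂ (h p.2))} :=
        hmeasE.compl
      rw [ae_iff, Measure.prod_apply hc]
      have hz : ∀ ω : ℝ, (volume : Measure ℝ) (Prod.mk ω ⁻¹' {p : ℝ × ℝ |
          ¬ (f (p.2 - p.1) * starRingEnd ℂ (f p.2) = h (p.2 - p.1) * starRingEnd ℂ (h p.2))}) = 0 := by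
        intro ω
        have := H ω
        rw [ae_iff] at this
        convert this using 2
        rfl
      simp only [hz]
      simp
    -- swap the coordinates
    have hswap : ∀ᵐ q : ℝ × ℝ ∂(volume : Measure ℝ).prod volume,
        f (q.1 - q.2) * starRingEnd ℂ (f q.1) = h (q.1 - q.2) * starRingEnd ℂ (h q.1) := by
      have := (Measure.measurePreserving_swap (μ := (volume : Measure ℝ))
        (ν := (volume : Measure ℝ))).quasiMeasurePreserving.ae hprod
      simpa using this
    have hae : ∀ᵐ t : ℝ, ∀ᵐ ω : ℝ,
        f (t - ω) * starRingEnd ℂ (f t) = h (t - ω) * starRingEnd ℂ (h t) :=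
      Measure.ae_ae_of_ae_prod hswap
    -- pick a good point t₀ with f t₀ ≠ 0
    have hfreq : ∃ᵐ t : ℝ, f t ≠ 0 := by
      rwa [Filter.not_eventually] at hf0
    obtain ⟨t₀, hft₀, hsl, hn₀⟩ := (hfreq.and_eventually (hae.and hnorm)).exists
    -- change variables ω ↦ t₀ - ω in the slice
    have hslice : ∀ᵐ s : ℝ,
        f s * starRingEnd ℂ (f t₀) = h s * starRingEnd ℂ (h t₀) := by
      have := (Measure.measurePreserving_sub_left (volume : Measure ℝ) t₀).quasiMeasurePreserving.ae hsl
      simpa using this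
    have habs : ‖f t₀‖ = ‖h t₀‖ := by
      rw [Complex.norm_def, Complex.norm_def, hn₀]
    have hft₀' : starRingEnd ℂ (f t₀) ≠ 0 := by simpa using hft₀
    refine ⟨starRingEnd ℂ (h t₀) / starRingEnd ℂ (f t₀), ?_, ?_⟩
    · rw [norm_div]
      have e1 : ‖starRingEnd ℂ (h t₀)‖ = ‖h t₀‖ := by
        simp
      have e2 : ‖starRingEnd ℂ (f t₀)‖ = ‖f t₀‖ := by
        simp
      rw [e1, e2, ← habs]
      exact div_self (by simpa using hft₀)
    · filter_upwards [hslice] with s hs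
      field_simp
      linear_combination hs
end

section
/- For β > 0 and f = Σ_{k∈ℤ} c_k φ(·−βk) ∈ V¹_β(φ) with c ∈ ℓ¹(ℤ), the squared spectrogram admits the expansion |Gf(x,ω)|² = Σ_k Σ_j c_k conj(c_j) · (1/2)e^{-(πβ²/4)(k−j)²} · e^{πiβ(j−k)ω} φ(ω) · φ(x − (β/2)(j+k)) for all (x,ω) ∈ ℝ². -/
open MeasureTheory Complex

private lemma expand_sq' (u v : ℝ) :
    ((u:ℂ) - (v:ℂ)*I)^2 = (((u^2 - v^2 : ℝ)) : ℂ) + (((-(2*u*v) : ℝ)):ℂ)*I := by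
  push_cast
  linear_combination (v:ℂ)^2 * Complex.I_sq

private lemma conj_aux (r q : ℝ) :
    (starRingEnd ℂ) ((r:ℂ) + (q:ℂ)*I) = (r:ℂ) - (q:ℂ)*I := by
  rw [map_add, map_mul, Complex.conj_ofReal, Complex.conj_ofReal, Complex.conj_I]
  ring

private lemma gauss_exponent' (a x ω : ℝ) :
    (((-(Real.pi*(a^2+x^2)) : ℝ)):ℂ) -
      ((((2*Real.pi*(a+x)) : ℝ):ℂ) - (((2*Real.pi*ω : ℝ)):ℂ)*I)^2 /
        (4 * (((-(2*Real.pi) : ℝ)):ℂ)) =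
    (((-(Real.pi/2)*(x-a)^2 - (Real.pi/2)*ω^2 : ℝ)) : ℂ) +
      (((-(Real.pi*(x+a)*ω) : ℝ)):ℂ)*I := by
  rw [expand_sq']
  have hπ : (Real.pi : ℂ) ≠ 0 := by exact_mod_cast Real.pi_ne_zero
  push_cast
  field_simp
  ring

private lemma gauss_integral' (a x ω : ℝ) :
    (∫ t : ℝ, Complex.exp ((((-(2*Real.pi) : ℝ)):ℂ) * (t:ℂ)^2 +
        ((((2*Real.pi*(a+x)) : ℝ):ℂ) - (((2*Real.pi*ω : ℝ)):ℂ)*I) * (t:ℂ) +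
        (((-(Real.pi*(a^2+x^2)) : ℝ)):ℂ))) =
      ((((1/2 : ℝ) ^ ((1:ℝ)/2) : ℝ)) : ℂ) *
        Complex.exp ((((-(Real.pi/2)*(x-a)^2 - (Real.pi/2)*ω^2 : ℝ)) : ℂ) +
          (((-(Real.pi*(x+a)*ω) : ℝ)):ℂ)*I) := by
  have hb : ((((-(2*Real.pi) : ℝ)):ℂ)).re < 0 := by simp [Real.pi_pos]
  rw [integral_cexp_quadratic hb, gauss_exponent' a x ω]
  congr 1
  have h2 : ((Real.pi:ℂ)) / -(((-(2*Real.pi) : ℝ)):ℂ) = ((1/2 : ℝ) : ℂ) := by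
    have hπ : (Real.pi : ℂ) ≠ 0 := by exact_mod_cast Real.pi_ne_zero
    push_cast
    field_simp
  rw [h2, Complex.ofReal_cpow (by norm_num : (0:ℝ) ≤ 1/2)]
  norm_num

/-- Expansion of the squared spectrogram of `f = Σ_k c_k φ(·-βk) ∈ V¹_β(φ)`. -/
theorem spectrogram_expansion (β : ℝ) (hβ : 0 < β) (c : ℤ → ℂ)
    (hc : Summable (fun k : ℤ => ‖c k‖)) (f : ℝ → ℂ)
    (hf : ∀ t : ℝ, f t = ∑' k : ℤ, c k * (Real.exp (-Real.pi * (t - β*k)^2) : ℂ))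
    (x ω : ℝ) :
    ((‖gaborTransform f x ω‖^2 : ℝ) : ℂ) =
      ∑' k : ℤ, ∑' j : ℤ,
        c k * starRingEnd ℂ (c j) *
          ((1/2 : ℝ) * Real.exp (-(Real.pi * β^2 / 4) * ((k : ℝ) - j)^2) : ℝ) *
          Complex.exp (Real.pi * Complex.I * β * ((j : ℝ) - k) * ω) *
          (Real.exp (-Real.pi * ω^2) : ℝ) *
          (Real.exp (-Real.pi * (x - β/2 * ((j : ℝ) + k))^2) : ℝ) := by
  set s : ℝ := (1/2 : ℝ) ^ ((1:ℝ)/2) with hs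
  set F : ℤ → ℝ → ℂ := fun k t => c k * Complex.exp ((((-(2*Real.pi) : ℝ)):ℂ) * (t:ℂ)^2 +
      ((((2*Real.pi*(β*k+x)) : ℝ):ℂ) - (((2*Real.pi*ω : ℝ)):ℂ)*I) * (t:ℂ) +
      (((-(Real.pi*((β*k)^2+x^2)) : ℝ)):ℂ)) with hF
  set Ex : ℤ → ℂ := fun k => (((-(Real.pi/2)*(x-β*k)^2 - (Real.pi/2)*ω^2 : ℝ)) : ℂ) +
      (((-(Real.pi*(x+β*k)*ω) : ℝ)):ℂ)*I with hEx
  have hb : ((((-(2*Real.pi) : ℝ)):ℂ)).re < 0 := by simp [Real.pi_pos]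
  have hFint : ∀ k : ℤ, Integrable (F k) := fun k =>
    (integrable_cexp_quadratic' hb _ _).const_mul _
  have hnorm : ∀ (k : ℤ) (t : ℝ), ‖F k t‖ =
      ‖c k‖ * (Real.exp (-Real.pi*(t-β*k)^2) * Real.exp (-Real.pi*(t-x)^2)) := by
    intro k t
    simp only [hF, norm_mul]
    congr 1
    rw [Complex.norm_exp, ← Real.exp_add]
    congr 1
    have heq : (((-(2*Real.pi) : ℝ)):ℂ) * (t:ℂ)^2 +
        ((((2*Real.pi*(β*k+x)) : ℝ):ℂ) - (((2*Real.pi*ω : ℝ)):ℂ)*I) * (t:ℂ) +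
        (((-(Real.pi*((β*k)^2+x^2)) : ℝ)):ℂ) =
        (((-Real.pi*(t-β*k)^2 + -Real.pi*(t-x)^2 : ℝ)):ℂ) + (((-(2*Real.pi*t*ω) : ℝ)):ℂ)*I := by
      push_cast; ring
    rw [heq]
    simp only [Complex.add_re, Complex.mul_I_re, Complex.ofReal_re, Complex.ofReal_im]
    ring
  have hGexp : Integrable (fun t : ℝ => Real.exp (-Real.pi*(t-x)^2)) := by
    have := (integrable_exp_neg_mul_sq Real.pi_pos).comp_sub_right (μ := volume) x
    simpa using this
  have hsum : Summable (fun k : ℤ => ∫ t : ℝ, ‖F k t‖) := by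
    apply Summable.of_nonneg_of_le (fun k => integral_nonneg fun t => norm_nonneg _)
      (fun k => ?_) (hc.mul_right (∫ t : ℝ, Real.exp (-Real.pi*(t-x)^2)))
    rw [← MeasureTheory.integral_const_mul]
    refine integral_mono (hFint k).norm (hGexp.const_mul _) (fun t => ?_)
    rw [hnorm k t]
    have h1 : Real.exp (-Real.pi*(t-β*k)^2) ≤ 1 := by
      rw [Real.exp_le_one_iff]
      nlinarith [sq_nonneg (t - β*(k:ℝ)), Real.pi_pos]
    calc ‖c k‖ * (Real.exp (-Real.pi*(t-β*k)^2) * Real.exp (-Real.pi*(t-x)^2))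
        ≤ ‖c k‖ * (1 * Real.exp (-Real.pi*(t-x)^2)) := by
          apply mul_le_mul_of_nonneg_left _ (norm_nonneg _)
          exact mul_le_mul_of_nonneg_right h1 (Real.exp_nonneg _)
      _ = ‖c k‖ * Real.exp (-Real.pi*(t-x)^2) := by ring
  have hpt : ∀ t : ℝ, f t * (Real.exp (-Real.pi * (t - x)^2) : ℂ) *
      Complex.exp (-2 * Real.pi * Complex.I * t * ω) = ∑' k : ℤ, F k t := by
    intro t
    rw [hf t, ← tsum_mul_right, ← tsum_mul_right]
    refine tsum_congr (fun k => ?_)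
    simp only [hF]
    rw [Complex.ofReal_exp, Complex.ofReal_exp, mul_assoc, mul_assoc,
      ← Complex.exp_add, ← Complex.exp_add]
    congr 2
    push_cast
    ring
  have hG : gaborTransform f x ω = ∑' k : ℤ, c k * ((s:ℂ) * Complex.exp (Ex k)) := by
    unfold gaborTransform
    simp_rw [hpt]
    rw [← integral_tsum_of_summable_integral_norm hFint hsum]
    refine tsum_congr (fun k => ?_)
    simp only [hF, hEx]
    rw [MeasureTheory.integral_const_mul, gauss_integral' (β*k) x ω]
  have hstarG : (starRingEnd ℂ) (gaborTransform f x ω) =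
      ∑' j : ℤ, (starRingEnd ℂ) (c j) * ((s:ℂ) * Complex.exp
        ((((-(Real.pi/2)*(x-β*j)^2 - (Real.pi/2)*ω^2 : ℝ)) : ℂ) -
          (((-(Real.pi*(x+β*j)*ω) : ℝ)):ℂ)*I)) := by
    rw [hG, show (starRingEnd ℂ) (∑' k : ℤ, c k * ((s:ℂ) * Complex.exp (Ex k))) =
      star (∑' k : ℤ, c k * ((s:ℂ) * Complex.exp (Ex k))) from rfl, tsum_star]
    refine tsum_congr (fun j => ?_)
    simp only [hEx]
    rw [show (star (c j * (((s:ℝ):ℂ) * Complex.exp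
        ((((-(Real.pi/2)*(x-β*j)^2 - (Real.pi/2)*ω^2 : ℝ)) : ℂ) +
          (((-(Real.pi*(x+β*j)*ω) : ℝ)):ℂ)*I))) : ℂ) = (starRingEnd ℂ) (c j * (((s:ℝ):ℂ) * Complex.exp
        ((((-(Real.pi/2)*(x-β*j)^2 - (Real.pi/2)*ω^2 : ℝ)) : ℂ) +
          (((-(Real.pi*(x+β*j)*ω) : ℝ)):ℂ)*I))) from rfl]
    rw [map_mul, map_mul, Complex.conj_ofReal, ← Complex.exp_conj, conj_aux]
  have hs2 : (s:ℂ) * (s:ℂ) = (((1:ℝ)/2 : ℝ) : ℂ) := by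
    rw [← Complex.ofReal_mul, hs, ← Real.rpow_add (by norm_num : (0:ℝ) < 1/2)]
    norm_num
  have hmc : ((‖gaborTransform f x ω‖^2 : ℝ) : ℂ) =
      gaborTransform f x ω * (starRingEnd ℂ) (gaborTransform f x ω) := by
    rw [Complex.mul_conj, Complex.normSq_eq_norm_sq]
  rw [hmc, hstarG, hG, ← tsum_mul_right]
  refine tsum_congr (fun k => ?_)
  rw [← tsum_mul_left]
  refine tsum_congr (fun j => ?_)
  have key : (s:ℂ) * Complex.exp (Ex k) * ((s:ℂ) * Complex.exp
      ((((-(Real.pi/2)*(x-β*j)^2 - (Real.pi/2)*ω^2 : ℝ)) : ℂ) -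
        (((-(Real.pi*(x+β*j)*ω) : ℝ)):ℂ)*I)) =
      (((1/2 : ℝ) * Real.exp (-(Real.pi * β^2 / 4) * ((k : ℝ) - j)^2) : ℝ) : ℂ) *
        Complex.exp (Real.pi * Complex.I * β * ((j : ℝ) - k) * ω) *
        ((Real.exp (-Real.pi * ω^2) : ℝ) : ℂ) *
        ((Real.exp (-Real.pi * (x - β/2 * ((j : ℝ) + k))^2) : ℝ) : ℂ) := by
    have hXeq : (Ex k) + ((((-(Real.pi/2)*(x-β*j)^2 - (Real.pi/2)*ω^2 : ℝ)) : ℂ) -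
        (((-(Real.pi*(x+β*j)*ω) : ℝ)):ℂ)*I) =
        (((-(Real.pi * β^2 / 4) * ((k : ℝ) - j)^2 : ℝ)):ℂ) +
        (Real.pi * Complex.I * β * ((j : ℝ) - k) * ω : ℂ) +
        (((-Real.pi * ω^2 : ℝ)):ℂ) +
        (((-Real.pi * (x - β/2 * ((j : ℝ) + k))^2 : ℝ)):ℂ) := by
      simp only [hEx]
      push_cast
      ring
    rw [mul_mul_mul_comm, ← Complex.exp_add, hs2, Complex.ofReal_mul, Complex.ofReal_exp,
      Complex.ofReal_exp, Complex.ofReal_exp, hXeq, Complex.exp_add, Complex.exp_add,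
      Complex.exp_add]
    push_cast
    ring
  linear_combination (c k * (starRingEnd ℂ) (c j)) * key
end
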